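/- The function f(ŝ) = (1 − ŝ)·ln(ŝ/(1 − ŝ)) satisfies f(ŝ) < 0.3 for all ŝ ∈ [1/2, 1); consequently, for α = 0.9616, 5·f(ŝ)/α + 1 < 3 for all ŝ ∈ [1/2, 1). -/

import Mathlib

open Real

lemma f_main (s : ℝ) (h1 : 1 / 2 ≤ s) (h2 : s < 1) :
    (1 - s) * Real.log (s / (1 - s)) < 0.3 := by
  set u : ℝ := 1 - s with hu
  have hu0 : 0 < u := by simp [hu]; linarith
  have hu2 : u ≤ 1 / 2 := by simp [hu]; linarith
  have hs0 : 0 < s := by linarith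
  rw [Real.log_div hs0.ne' hu0.ne']
  have hA : Real.log s ≤ s - 1 := Real.log_le_sub_one_of_pos hs0
  have hB : Real.log (1 / (4 * u)) ≤ 1 / (4 * u) - 1 :=
    Real.log_le_sub_one_of_pos (by positivity)
  have hrw : Real.log (1 / (4 * u)) = -(Real.log 4 + Real.log u) := by
    rw [one_div, Real.log_inv, Real.log_mul (by norm_num) hu0.ne']
  have hlog4 : Real.log 4 = 2 * Real.log 2 := by
    rw [show (4 : ℝ) = 2 ^ 2 by norm_num, Real.log_pow]; push_cast; ring
  have h2d : Real.log 2 < 0.6931471808 := Real.log_two_lt_d9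
  rw [hrw] at hB
  -- from hB : -(log 4 + log u) ≤ 1/(4u) - 1
  have hquarter : u * (1 / (4 * u)) = 1 / 4 := by field_simp
  have hmul : u * (-(Real.log 4 + Real.log u)) ≤ u * (1 / (4 * u) - 1) :=
    mul_le_mul_of_nonneg_left hB hu0.le
  have hmulA : u * Real.log s ≤ u * (s - 1) :=
    mul_le_mul_of_nonneg_left hA hu0.le
  have hs1 : s - 1 = -u := by simp [hu]
  have key : u * (Real.log s - Real.log u) ≤ -u ^ 2 + (Real.log 4 - 1) * u + 1 / 4 := by
    have : u * (1 / (4 * u) - 1) = 1 / 4 - u := by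
      rw [mul_sub, hquarter, mul_one]
    nlinarith [hmul, hmulA]
  have hlog4lt : Real.log 4 < 1.3862943616 := by
    rw [hlog4]; linarith
  have hlog4pos : (0:ℝ) < Real.log 4 := Real.log_pos (by norm_num)
  nlinarith [sq_nonneg (u - (Real.log 4 - 1) / 2), sq_nonneg (Real.log 4 - 1)]

/-- `f(ŝ) = (1 − ŝ)·ln(ŝ/(1 − ŝ)) < 0.3` on `[1/2, 1)`, hence
`5·f(ŝ)/α + 1 < 3` for `α = 0.9616`. -/
theorem f_lt_and_kappa5_lt_three :
    (∀ s : ℝ, 1 / 2 ≤ s → s < 1 → (1 - s) * Real.log (s / (1 - s)) < 0.3) ∧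
      (∀ s : ℝ, 1 / 2 ≤ s → s < 1 →
        5 * ((1 - s) * Real.log (s / (1 - s))) / (0.9616 : ℝ) + 1 < 3) := by
  refine ⟨fun s h1 h2 => f_main s h1 h2, fun s h1 h2 => ?_⟩
  have := f_main s h1 h2
  have h : 5 * ((1 - s) * Real.log (s / (1 - s))) / (0.9616 : ℝ) < 2 := by
    rw [div_lt_iff₀ (by norm_num : (0:ℝ) < 0.9616)]; linarith
  linarith
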